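/- Let A_t ∈ ℝ^{m×n} and B_t ∈ ℝ^{n×p} for t = 1,…,T be real matrices. Then ‖∑_{t=1}^T A_t B_t‖₂ ≤ ‖∑_{t=1}^T A_t A_tᵀ‖₂^{1/2} · ‖∑_{t=1}^T B_tᵀ B_t‖₂^{1/2}. -/

import Mathlib

open Matrix
open scoped RealInnerProductSpace

noncomputable def specNorm {m n : ℕ} (A : Matrix (Fin m) (Fin n) ℝ) : ℝ :=
  ‖LinearMap.toContinuousLinearMap (Matrix.toEuclideanLin A)‖

lemma toEuclideanLin_mul' {m n p : ℕ} (X : Matrix (Fin m) (Fin n) ℝ)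
    (Y : Matrix (Fin n) (Fin p) ℝ) (v : EuclideanSpace ℝ (Fin p)) :
    toEuclideanLin (X * Y) v = toEuclideanLin X (toEuclideanLin Y v) := by
  simp [Matrix.toEuclideanLin_apply, Matrix.mulVec_mulVec]

lemma inner_toEuclideanLin {m n : ℕ} (X : Matrix (Fin m) (Fin n) ℝ)
    (u : EuclideanSpace ℝ (Fin n)) (w : EuclideanSpace ℝ (Fin m)) :
    (inner ℝ (Matrix.toEuclideanLin X u) (w) : ℝ) = (inner ℝ (u) (Matrix.toEuclideanLin Xᵀ w) : ℝ) := by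
  rw [← Matrix.conjTranspose_eq_transpose_of_trivial,
    Matrix.toEuclideanLin_conjTranspose_eq_adjoint, LinearMap.adjoint_inner_right]

lemma specNorm_apply_le {m n : ℕ} (X : Matrix (Fin m) (Fin n) ℝ)
    (v : EuclideanSpace ℝ (Fin n)) :
    ‖Matrix.toEuclideanLin X v‖ ≤ specNorm X * ‖v‖ := by
  have := (LinearMap.toContinuousLinearMap (Matrix.toEuclideanLin X)).le_opNorm v
  simpa [specNorm] using this

lemma specNorm_nonneg {m n : ℕ} (X : Matrix (Fin m) (Fin n) ℝ) : 0 ≤ specNorm X :=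
  norm_nonneg _

/-- Lemma A.7: a matrix Cauchy–Schwarz inequality in the spectral norm. -/
theorem matrix_cauchy_schwarz_specNorm {m n p T : ℕ}
    (A : Fin T → Matrix (Fin m) (Fin n) ℝ) (B : Fin T → Matrix (Fin n) (Fin p) ℝ) :
    specNorm (∑ t, A t * B t) ≤
      (specNorm (∑ t, A t * (A t)ᵀ)) ^ ((1 : ℝ) / 2) *
        (specNorm (∑ t, (B t)ᵀ * B t)) ^ ((1 : ℝ) / 2) := by
  classical
  rw [← Real.sqrt_eq_rpow, ← Real.sqrt_eq_rpow]
  set SA := ∑ t, A t * (A t)ᵀ with hSA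
  set SB := ∑ t, (B t)ᵀ * B t with hSB
  have ha := specNorm_nonneg SA
  have hb := specNorm_nonneg SB
  apply ContinuousLinearMap.opNorm_le_bound _ (by positivity)
  intro x
  simp only [LinearMap.coe_toContinuousLinearMap']
  set y : EuclideanSpace ℝ (Fin m) := Matrix.toEuclideanLin (∑ t, A t * B t) x with hy
  set u : Fin T → EuclideanSpace ℝ (Fin n) := fun t => Matrix.toEuclideanLin (A t)ᵀ y with hu
  set v : Fin T → EuclideanSpace ℝ (Fin n) := fun t => Matrix.toEuclideanLin (B t) x with hv
  -- key: ‖y‖^2 = ∑ ⟪u t, v t⟫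
  have hsum : ‖y‖ ^ 2 = ∑ t, (inner ℝ (u t) (v t) : ℝ) := by
    have hy' : y = ∑ t, Matrix.toEuclideanLin (A t) (v t) := by
      rw [hy, map_sum, LinearMap.sum_apply]
      exact Finset.sum_congr rfl fun t _ => toEuclideanLin_mul' _ _ _
    calc ‖y‖ ^ 2 = (inner ℝ (y) (y) : ℝ) := (real_inner_self_eq_norm_sq y).symm
      _ = (inner ℝ (y) (∑ t, Matrix.toEuclideanLin (A t) (v t)) : ℝ) := by rw [← hy']
      _ = ∑ t, (inner ℝ (y) (Matrix.toEuclideanLin (A t) (v t)) : ℝ) := inner_sum _ _ _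
      _ = ∑ t, (inner ℝ (u t) (v t) : ℝ) := Finset.sum_congr rfl fun t _ => by
            rw [real_inner_comm, inner_toEuclideanLin, real_inner_comm]
  -- sum of squares bounds
  have hA2 : ∑ t, ‖u t‖ ^ 2 ≤ specNorm SA * ‖y‖ ^ 2 := by
    have : ∑ t, ‖u t‖ ^ 2 = (inner ℝ (y) (Matrix.toEuclideanLin SA y) : ℝ) := by
      rw [hSA, map_sum, LinearMap.sum_apply, inner_sum]
      refine Finset.sum_congr rfl fun t _ => ?_
      rw [toEuclideanLin_mul', real_inner_comm, inner_toEuclideanLin,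
        real_inner_self_eq_norm_sq]
    rw [this]
    calc (inner ℝ (y) (Matrix.toEuclideanLin SA y) : ℝ) ≤ ‖y‖ * ‖Matrix.toEuclideanLin SA y‖ :=
          real_inner_le_norm _ _
      _ ≤ ‖y‖ * (specNorm SA * ‖y‖) := by
          exact mul_le_mul_of_nonneg_left (specNorm_apply_le _ _) (norm_nonneg _)
      _ = specNorm SA * ‖y‖ ^ 2 := by ring
  have hB2 : ∑ t, ‖v t‖ ^ 2 ≤ specNorm SB * ‖x‖ ^ 2 := by
    have : ∑ t, ‖v t‖ ^ 2 = (inner ℝ (x) (Matrix.toEuclideanLin SB x) : ℝ) := by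
      rw [hSB, map_sum, LinearMap.sum_apply, inner_sum]
      refine Finset.sum_congr rfl fun t _ => ?_
      rw [toEuclideanLin_mul', ← inner_toEuclideanLin, real_inner_self_eq_norm_sq]
    rw [this]
    calc (inner ℝ (x) (Matrix.toEuclideanLin SB x) : ℝ) ≤ ‖x‖ * ‖Matrix.toEuclideanLin SB x‖ :=
          real_inner_le_norm _ _
      _ ≤ ‖x‖ * (specNorm SB * ‖x‖) := by
          exact mul_le_mul_of_nonneg_left (specNorm_apply_le _ _) (norm_nonneg _)
      _ = specNorm SB * ‖x‖ ^ 2 := by ring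
  -- Cauchy–Schwarz over t
  have hCS : ‖y‖ ^ 2 ≤ Real.sqrt (∑ t, ‖u t‖ ^ 2) * Real.sqrt (∑ t, ‖v t‖ ^ 2) := by
    rw [hsum]
    calc ∑ t, (inner ℝ (u t) (v t) : ℝ) ≤ ∑ t, ‖u t‖ * ‖v t‖ :=
          Finset.sum_le_sum fun t _ => real_inner_le_norm _ _
      _ = ∑ t, Real.sqrt (‖u t‖ ^ 2) * Real.sqrt (‖v t‖ ^ 2) := by
          simp [Real.sqrt_sq (norm_nonneg _)]
      _ ≤ _ := Real.sum_sqrt_mul_sqrt_le _ (fun t => sq_nonneg _) (fun t => sq_nonneg _)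
  have key : ‖y‖ ^ 2 ≤ (Real.sqrt (specNorm SA) * ‖y‖) * (Real.sqrt (specNorm SB) * ‖x‖) := by
    refine hCS.trans (mul_le_mul ?_ ?_ (Real.sqrt_nonneg _) (by positivity))
    · calc Real.sqrt (∑ t, ‖u t‖ ^ 2) ≤ Real.sqrt (specNorm SA * ‖y‖ ^ 2) :=
            Real.sqrt_le_sqrt hA2
        _ = Real.sqrt (specNorm SA) * ‖y‖ := by
            rw [Real.sqrt_mul ha, Real.sqrt_sq (norm_nonneg _)]
    · calc Real.sqrt (∑ t, ‖v t‖ ^ 2) ≤ Real.sqrt (specNorm SB * ‖x‖ ^ 2) :=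
            Real.sqrt_le_sqrt hB2
        _ = Real.sqrt (specNorm SB) * ‖x‖ := by
            rw [Real.sqrt_mul hb, Real.sqrt_sq (norm_nonneg _)]
  rcases eq_or_lt_of_le (norm_nonneg y) with h0 | h0
  · rw [← h0]; positivity
  · have : ‖y‖ * ‖y‖ ≤ (Real.sqrt (specNorm SA) * Real.sqrt (specNorm SB) * ‖x‖) * ‖y‖ := by
      nlinarith [key]
    exact le_of_mul_le_mul_right this h0
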